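/- arXiv:1207.2344 — 4 statements merged into one kernel-verified Lean document; each statement's English description precedes it below -/
import Mathlib

section
/- Let R be a commutative ring, A an associative (not necessarily commutative) R-algebra, m a natural number, u : Fin m → A a family of elements, and C = (c_{ij}) an m × m matrix over R that is alternating (i.e. c_{ij} = -c_{ji} for all i, j and c_{ii} = 0 for all i). Set χ = Σ_{i<j} c_{ij}(u_i u_j - u_j u_i) ∈ A. Then for every y ∈ A one has Σ_{i,j} c_{ij} ⁅u_j, ⁅u_i, y⁆⁆ = y·χ - χ·y, where ⁅a,b⁆ = a·b - b·a denotes the ring commutator and the double sum ranges over all pairs (i,j) in Fin m × Fin m. -/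
/-- The Jacobi-identity computation (skew-symmetric / `n` odd case): for an alternating
matrix `C` over `R` and elements `u i` of an associative `R`-algebra `A`, with
`χ = ∑_{i<j} c_{ij}(u_i u_j - u_j u_i)`, the double sum `∑_{i,j} c_{ij} ⁅u_j, ⁅u_i, y⁆⁆`
is the commutator `y * χ - χ * y`. -/
theorem stmt0 (R : Type*) [CommRing R] (A : Type*) [Ring A] [Algebra R A]
    (m : ℕ) (u : Fin m → A) (C : Matrix (Fin m) (Fin m) R)
    (hAlt : ∀ i j, C i j = - C j i) (hDiag : ∀ i, C i i = 0)
    (χ : A)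
    (hχ : χ = ∑ i : Fin m, ∑ j ∈ Finset.Ioi i, C i j • (u i * u j - u j * u i))
    (y : A) :
    ∑ i : Fin m, ∑ j : Fin m, C i j • ⁅u j, ⁅u i, y⁆⁆ = y * χ - χ * y := by
  have key := Finset.sum_sum_Ioi_add_eq_sum_sum_off_diag
    (fun j i => C i j • ⁅u j, ⁅u i, y⁆⁆)
  have h1 : ∑ i : Fin m, ∑ j : Fin m, C i j • ⁅u j, ⁅u i, y⁆⁆
      = ∑ i : Fin m, ∑ j ∈ {i}ᶜ, C i j • ⁅u j, ⁅u i, y⁆⁆ := by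
    refine Finset.sum_congr rfl fun i _ => ?_
    rw [← Finset.sum_compl_add_sum ({i} : Finset (Fin m))]
    simp [hDiag]
  have key' : ∑ i : Fin m, ∑ j ∈ {i}ᶜ, C i j • ⁅u j, ⁅u i, y⁆⁆
      = ∑ i : Fin m, ∑ j ∈ Finset.Ioi i,
          (C i j • ⁅u j, ⁅u i, y⁆⁆ + C j i • ⁅u i, ⁅u j, y⁆⁆) := by
    convert key.symm using 3
  refine (h1.trans key').trans ?_
  rw [hχ, Finset.mul_sum, Finset.sum_mul, ← Finset.sum_sub_distrib]
  refine Finset.sum_congr rfl fun i _ => ?_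
  rw [Finset.mul_sum, Finset.sum_mul, ← Finset.sum_sub_distrib]
  refine Finset.sum_congr rfl fun j _ => ?_
  rw [hAlt j i, mul_smul_comm, smul_mul_assoc, ← smul_sub, neg_smul, ← sub_eq_add_neg,
    ← smul_sub]
  congr 1
  simp only [Ring.lie_def]
  noncomm_ring
end

section
/- Let R be a commutative ring, m a natural number, u_i = ι(i) ∈ FreeAlgebra R (Fin m) the generators of the free (tensor) algebra on m generators, and C = (c_{ij}) an m × m matrix over R that is alternating (c_{ij} = -c_{ji} for all i, j and c_{ii} = 0 for all i). Set χ = Σ_{i<j} c_{ij}(u_i u_j - u_j u_i). Then for every y ∈ FreeAlgebra R (Fin m), the element Σ_{i,j} c_{ij} ⁅u_j, ⁅u_i, y⁆⁆ lies in the two-sided ideal of FreeAlgebra R (Fin m) generated by χ; equivalently, its image in the quotient algebra U = FreeAlgebra R (Fin m)/(χ) is zero. -/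
/-- In the free tensor algebra `T(V) = FreeAlgebra R (Fin m)`, with `C` an alternating
matrix and `χ = ∑_{i<j} c_{ij}(u_i u_j - u_j u_i)`, the element
`∑_{i,j} c_{ij} ⁅u_j, ⁅u_i, y⁆⁆` lies in the two-sided ideal generated by `χ`
(equivalently its image in `U = T(V)/(χ)` is zero). -/
theorem stmt1 (R : Type*) [CommRing R] (m : ℕ)
    (C : Matrix (Fin m) (Fin m) R)
    (hAlt : ∀ i j, C i j = - C j i) (hDiag : ∀ i, C i i = 0)
    (u : Fin m → FreeAlgebra R (Fin m)) (hu : ∀ i, u i = FreeAlgebra.ι R i)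
    (χ : FreeAlgebra R (Fin m))
    (hχ : χ = ∑ i : Fin m, ∑ j ∈ Finset.Ioi i, C i j • (u i * u j - u j * u i))
    (y : FreeAlgebra R (Fin m)) :
    (∑ i : Fin m, ∑ j : Fin m, C i j • ⁅u j, ⁅u i, y⁆⁆) ∈
      TwoSidedIdeal.span {χ} := by
  -- A "swap" lemma from antisymmetry of C.
  have swap : ∀ f : Fin m → Fin m → FreeAlgebra R (Fin m),
      (∑ i : Fin m, ∑ j : Fin m, C i j • f i j)
        = -∑ i : Fin m, ∑ j : Fin m, C i j • f j i := by
    intro f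
    have h1 : (∑ i : Fin m, ∑ j : Fin m, C i j • f i j)
        = ∑ i : Fin m, ∑ j : Fin m, C j i • f j i := Finset.sum_comm
    rw [h1]
    rw [← Finset.sum_neg_distrib]
    refine Finset.sum_congr rfl fun i _ => ?_
    rw [← Finset.sum_neg_distrib]
    refine Finset.sum_congr rfl fun j _ => ?_
    rw [hAlt j i, neg_smul]
  -- The key identity: the double sum equals `y * χ - χ * y`.
  have hS : χ = ∑ i : Fin m, ∑ j : Fin m, C i j • (u i * u j) := by
    have h0 : χ = ∑ i : Fin m, ∑ j ∈ Finset.Ioi i,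
        ((fun p q : Fin m => C q p • (u q * u p)) j i
          + (fun p q : Fin m => C q p • (u q * u p)) i j) := by
      rw [hχ]
      refine Finset.sum_congr rfl fun i _ => Finset.sum_congr rfl fun j _ => ?_
      simp only [smul_sub]
      rw [sub_eq_add_neg, ← neg_smul, ← hAlt]
    rw [h0, Finset.sum_sum_Ioi_add_eq_sum_sum_off_diag]
    refine Finset.sum_congr rfl fun i _ => ?_
    refine (Finset.sum_congr ?_ fun _ _ => rfl).trans
      (Finset.sum_erase _ (by rw [hDiag i, zero_smul]))
    ext j; simp [eq_comm]
  have key : (∑ i : Fin m, ∑ j : Fin m, C i j • ⁅u j, ⁅u i, y⁆⁆)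
      = y * χ - χ * y := by
    have expand : (∑ i : Fin m, ∑ j : Fin m, C i j • ⁅u j, ⁅u i, y⁆⁆)
        = (∑ i : Fin m, ∑ j : Fin m, C i j • (u j * (u i * y)))
          - (∑ i : Fin m, ∑ j : Fin m, C i j • (u j * (y * u i)))
          - ((∑ i : Fin m, ∑ j : Fin m, C i j • (u i * (y * u j)))
          - (∑ i : Fin m, ∑ j : Fin m, C i j • (y * (u i * u j)))) := by
      simp only [Ring.lie_def, mul_sub, sub_mul, smul_sub,
        Finset.sum_sub_distrib, mul_assoc]
    rw [expand]
    rw [swap (fun i j => u j * (u i * y)), swap (fun i j => u j * (y * u i))]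
    have e1 : (∑ i : Fin m, ∑ j : Fin m, C i j • (u i * (u j * y))) = χ * y := by
      rw [hS, Finset.sum_mul]
      refine Finset.sum_congr rfl fun i _ => ?_
      rw [Finset.sum_mul]
      refine Finset.sum_congr rfl fun j _ => ?_
      rw [smul_mul_assoc, mul_assoc]
    have e2 : (∑ i : Fin m, ∑ j : Fin m, C i j • (y * (u i * u j))) = y * χ := by
      rw [hS, Finset.mul_sum]
      refine Finset.sum_congr rfl fun i _ => ?_
      rw [Finset.mul_sum]
      refine Finset.sum_congr rfl fun j _ => ?_
      rw [mul_smul_comm]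
    rw [e1, e2]
    abel
  rw [key]
  have hmem : χ ∈ TwoSidedIdeal.span {χ} :=
    TwoSidedIdeal.subset_span (Set.mem_singleton _)
  exact TwoSidedIdeal.sub_mem _
    (TwoSidedIdeal.mul_mem_left _ _ _ hmem)
    (TwoSidedIdeal.mul_mem_right _ _ _ hmem)
end

section
/- Let R be a commutative ring, A an associative (not necessarily commutative) R-algebra, m a natural number, u : Fin m → A a family of elements, and C = (c_{ij}) a symmetric m × m matrix over R (c_{ij} = c_{ji}). Let s ∈ R satisfy s² = 1. Set χ = Σ_{i<j} c_{ij}(u_i u_j + u_j u_i) + Σ_i c_{ii} u_i² ∈ A. Then for every y ∈ A, writing z_i = u_i y - s·y u_i, one has Σ_{i,j} c_{ij}(u_j z_i + s·z_i u_j) = χ·y - y·χ, where the double sum ranges over all pairs (i,j) in Fin m × Fin m. -/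
lemma sq_sum_split {A : Type*} [AddCommMonoid A] (m : ℕ) (f : Fin m → Fin m → A) :
    ∑ i : Fin m, ∑ j : Fin m, f i j =
      (∑ i : Fin m, ∑ j ∈ Finset.Ioi i, (f i j + f j i)) + ∑ i : Fin m, f i i := by
  have huniv : ∀ i : Fin m, (Finset.univ : Finset (Fin m)) =
      insert i (Finset.Iio i ∪ Finset.Ioi i) := by
    intro i; ext j
    simp only [Finset.mem_univ, Finset.mem_insert, Finset.mem_union, Finset.mem_Iio,
      Finset.mem_Ioi, true_iff]
    rcases lt_trichotomy j i with h | h | h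
    · exact Or.inr (Or.inl h)
    · exact Or.inl h
    · exact Or.inr (Or.inr h)
  have hnotmem : ∀ i : Fin m, i ∉ Finset.Iio i ∪ Finset.Ioi i := by
    intro i; simp
  have hdisj : ∀ i : Fin m, Disjoint (Finset.Iio i) (Finset.Ioi i) := by
    intro i
    simp only [Finset.disjoint_left, Finset.mem_Iio, Finset.mem_Ioi]
    intro a h1 h2; exact absurd (h1.trans h2) (lt_irrefl a)
  have hswap : ∑ i : Fin m, ∑ j ∈ Finset.Iio i, f i j =
      ∑ i : Fin m, ∑ j ∈ Finset.Ioi i, f j i := by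
    rw [Finset.sum_comm' (s' := fun j => Finset.Ioi j) (t' := Finset.univ)]
    intro i j
    simp only [Finset.mem_univ, Finset.mem_Iio, Finset.mem_Ioi, true_and, and_true]
  calc ∑ i : Fin m, ∑ j : Fin m, f i j
      = ∑ i : Fin m, (f i i + (∑ j ∈ Finset.Iio i, f i j + ∑ j ∈ Finset.Ioi i, f i j)) := by
        refine Finset.sum_congr rfl fun i _ => ?_
        rw [huniv i, Finset.sum_insert (hnotmem i), Finset.sum_union (hdisj i)]
    _ = (∑ i : Fin m, ∑ j ∈ Finset.Ioi i, (f i j + f j i)) + ∑ i : Fin m, f i i := by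
        simp only [Finset.sum_add_distrib, hswap]
        abel

/-- The graded Jacobi-identity computation (symmetric / `n` even case): for a symmetric
matrix `C`, a sign `s` with `s² = 1`, elements `u i` of an associative `R`-algebra `A`,
`χ = ∑_{i<j} c_{ij}(u_i u_j + u_j u_i) + ∑_i c_{ii} u_i²`, and `z_i = u_i y - s • (y u_i)`,
one has `∑_{i,j} c_{ij}(u_j z_i + s • (z_i u_j)) = χ y - y χ`. -/
theorem stmt2 (R : Type*) [CommRing R] (A : Type*) [Ring A] [Algebra R A]
    (m : ℕ) (u : Fin m → A) (C : Matrix (Fin m) (Fin m) R)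
    (hSymm : ∀ i j, C i j = C j i)
    (s : R) (hs : s ^ 2 = 1)
    (χ : A)
    (hχ : χ = (∑ i : Fin m, ∑ j ∈ Finset.Ioi i, C i j • (u i * u j + u j * u i)) +
      ∑ i : Fin m, C i i • (u i * u i))
    (y : A) (z : Fin m → A) (hz : ∀ i, z i = u i * y - s • (y * u i)) :
    ∑ i : Fin m, ∑ j : Fin m, C i j • (u j * z i + s • (z i * u j)) =
      χ * y - y * χ := by
  have hss : s * s = 1 := by rw [← sq]; exact hs
  -- per-term expansion
  have hterm : ∀ i j : Fin m,
      C i j • (u j * z i + s • (z i * u j)) =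
        (C i j • (u j * u i)) * y - y * (C i j • (u i * u j)) +
          ((s * C i j) • (u i * (y * u j)) - (s * C i j) • (u j * (y * u i))) := by
    intro i j
    rw [hz]
    simp only [mul_sub, sub_mul, smul_sub, smul_add, mul_smul_comm, smul_mul_assoc,
      smul_smul, mul_assoc]
    rw [hss, mul_one, mul_comm (C i j) s]
    abel
  have hχ1 : ∑ i : Fin m, ∑ j : Fin m, C i j • (u i * u j) = χ := by
    rw [sq_sum_split m (fun i j => C i j • (u i * u j)), hχ]
    congr 1
    refine Finset.sum_congr rfl fun i _ => Finset.sum_congr rfl fun j hj => ?_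
    rw [smul_add, hSymm j i]
  have hχ2 : ∑ i : Fin m, ∑ j : Fin m, C i j • (u j * u i) = χ := by
    rw [sq_sum_split m (fun i j => C i j • (u j * u i)), hχ]
    congr 1
    refine Finset.sum_congr rfl fun i _ => Finset.sum_congr rfl fun j hj => ?_
    rw [smul_add, hSymm j i]
    abel
  have hcross : ∑ i : Fin m, ∑ j : Fin m, (s * C i j) • (u i * (y * u j)) =
      ∑ i : Fin m, ∑ j : Fin m, (s * C i j) • (u j * (y * u i)) := by
    rw [Finset.sum_comm]
    refine Finset.sum_congr rfl fun i _ => Finset.sum_congr rfl fun j _ => ?_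
    rw [hSymm j i]
  calc ∑ i : Fin m, ∑ j : Fin m, C i j • (u j * z i + s • (z i * u j))
      = ∑ i : Fin m, ∑ j : Fin m, ((C i j • (u j * u i)) * y - y * (C i j • (u i * u j)) +
          ((s * C i j) • (u i * (y * u j)) - (s * C i j) • (u j * (y * u i)))) := by
        exact Finset.sum_congr rfl fun i _ => Finset.sum_congr rfl fun j _ => hterm i j
    _ = ((∑ i : Fin m, ∑ j : Fin m, C i j • (u j * u i)) * y -
          y * (∑ i : Fin m, ∑ j : Fin m, C i j • (u i * u j))) +
          ((∑ i : Fin m, ∑ j : Fin m, (s * C i j) • (u i * (y * u j))) -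
           (∑ i : Fin m, ∑ j : Fin m, (s * C i j) • (u j * (y * u i)))) := by
        simp only [Finset.sum_add_distrib, Finset.sum_sub_distrib, Finset.sum_mul,
          Finset.mul_sum]
    _ = χ * y - y * χ := by rw [hχ1, hχ2, hcross, sub_self, add_zero]
end

section
/- Let R be a commutative ring, m a natural number, u_i = ι(i) ∈ FreeAlgebra R (Fin m) the generators of the free (tensor) algebra on m generators, C = (c_{ij}) a symmetric m × m matrix over R, and s ∈ R with s² = 1. Set χ = Σ_{i<j} c_{ij}(u_i u_j + u_j u_i) + Σ_i c_{ii} u_i². Then for every y ∈ FreeAlgebra R (Fin m), writing z_i = u_i y - s·y u_i, the element Σ_{i,j} c_{ij}(u_j z_i + s·z_i u_j) lies in the two-sided ideal of FreeAlgebra R (Fin m) generated by χ; equivalently its image in the quotient algebra U = FreeAlgebra R (Fin m)/(χ) is zero. -/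
/-- In the free tensor algebra `T(V) = FreeAlgebra R (Fin m)`, with `C` symmetric,
`s² = 1`, `χ = ∑_{i<j} c_{ij}(u_i u_j + u_j u_i) + ∑_i c_{ii} u_i²`, and
`z_i = u_i y - s • (y u_i)`, the element `∑_{i,j} c_{ij}(u_j z_i + s • (z_i u_j))`
lies in the two-sided ideal generated by `χ` (equivalently its image in
`U = T(V)/(χ)` is zero). -/
theorem stmt3 (R : Type*) [CommRing R] (m : ℕ)
    (C : Matrix (Fin m) (Fin m) R) (hSymm : ∀ i j, C i j = C j i)
    (s : R) (hs : s ^ 2 = 1)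
    (u : Fin m → FreeAlgebra R (Fin m)) (hu : ∀ i, u i = FreeAlgebra.ι R i)
    (χ : FreeAlgebra R (Fin m))
    (hχ : χ = (∑ i : Fin m, ∑ j ∈ Finset.Ioi i, C i j • (u i * u j + u j * u i)) +
      ∑ i : Fin m, C i i • (u i * u i))
    (y : FreeAlgebra R (Fin m)) (z : Fin m → FreeAlgebra R (Fin m))
    (hz : ∀ i, z i = u i * y - s • (y * u i)) :
    (∑ i : Fin m, ∑ j : Fin m, C i j • (u j * z i + s • (z i * u j))) ∈
      TwoSidedIdeal.span {χ} := by
  -- χ equals the full double sum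
  have hfull : χ = ∑ i : Fin m, ∑ j : Fin m, C i j • (u i * u j) := by
    have off : (∑ i : Fin m, ∑ j ∈ Finset.Ioi i, C i j • (u i * u j + u j * u i))
        = ∑ i : Fin m, ∑ j ∈ Finset.univ.erase i, C j i • (u j * u i) := by
      have base : (∑ i : Fin m, ∑ j ∈ Finset.Ioi i,
          (C j i • (u j * u i) + C i j • (u i * u j)))
          = ∑ i : Fin m, ∑ j ∈ Finset.univ.erase i, C j i • (u j * u i) := by
        simpa [Finset.compl_singleton] using
          Finset.sum_sum_Ioi_add_eq_sum_sum_off_diag (fun i j => C i j • (u i * u j))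
      rw [← base]
      refine Finset.sum_congr rfl fun i _ => Finset.sum_congr rfl fun j _ => ?_
      rw [smul_add, hSymm i j]
      exact add_comm _ _
    have comm : (∑ i : Fin m, ∑ j ∈ Finset.univ.erase i, C j i • (u j * u i))
        = (∑ i : Fin m, ∑ j : Fin m, C i j • (u i * u j))
          - ∑ i : Fin m, C i i • (u i * u i) := by
      have h1 : ∀ i : Fin m, (∑ j ∈ Finset.univ.erase i, C j i • (u j * u i))
          = (∑ j : Fin m, C j i • (u j * u i)) - C i i • (u i * u i) := by
        intro i
        rw [← Finset.sum_erase_add Finset.univ _ (Finset.mem_univ i),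
          add_sub_cancel_right]
      simp_rw [h1, Finset.sum_sub_distrib]
      congr 1
      exact Finset.sum_comm
    rw [hχ, off, comm]
    abel
  -- Also χ equals the transposed full double sum
  have hfull' : χ = ∑ i : Fin m, ∑ j : Fin m, C i j • (u j * u i) := by
    rw [hfull, Finset.sum_comm]
    exact Finset.sum_congr rfl fun j _ => Finset.sum_congr rfl fun i _ => by
      rw [hSymm i j]
  -- the key algebraic identity
  have key : (∑ i : Fin m, ∑ j : Fin m, C i j • (u j * z i + s • (z i * u j)))
      = χ * y - y * χ := by
    have expand : ∀ i j : Fin m, C i j • (u j * z i + s • (z i * u j))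
        = (C i j • (u j * u i)) * y - y * (C i j • (u i * u j))
          + ((C i j * s) • (u i * y * u j) - (C i j * s) • (u j * y * u i)) := by
      intro i j
      rw [hz i]
      have h2 : (s * s) • (y * (u i * u j)) = y * (u i * u j) := by
        rw [← sq, hs, one_smul]
      simp only [mul_sub, sub_mul, smul_sub, mul_smul_comm, smul_mul_assoc,
        smul_smul, smul_add, mul_assoc, h2]
      abel
    simp_rw [expand, Finset.sum_add_distrib, Finset.sum_sub_distrib,
      ← Finset.sum_mul, ← Finset.mul_sum]
    have hz0 : (∑ i : Fin m, ∑ j : Fin m, (C i j * s) • (u i * y * u j))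
        - ∑ i : Fin m, ∑ j : Fin m, (C i j * s) • (u j * y * u i) = 0 := by
      rw [sub_eq_zero, Finset.sum_comm]
      exact Finset.sum_congr rfl fun j _ => Finset.sum_congr rfl fun i _ => by
        rw [hSymm i j]
    rw [hz0, add_zero, ← hfull, ← hfull']
  rw [key]
  have hχmem : χ ∈ TwoSidedIdeal.span {χ} :=
    TwoSidedIdeal.subset_span (Set.mem_singleton χ)
  exact sub_mem (TwoSidedIdeal.mul_mem_right _ _ _ hχmem)
    (TwoSidedIdeal.mul_mem_left _ _ _ hχmem)
end
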